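/- Suppose θ : [0,∞) → [0,∞) is decreasing with θ(r) ≥ 4/√r for r ≥ 1, and suppose ∑_{m=1}^∞ θ(m⁴)/m = ∞. Let ρ ≥ 0 and define b_m = sup_{r≥0} (ρ² + r²)^m e^{−rθ(r)/2} for m ≥ max{2, ρ}. Then ∑_m b_m^{−1/(2m)} = ∞. -/

import Mathlib

/-- Optimization bound: `r^(2m) e^(-rc/2) ≤ (4m/c)^(2m)` for `c > 0`, `r ≥ 0`. -/
lemma aux_mid (m : ℕ) (c r : ℝ) (hc : 0 < c) (hr : 0 ≤ r) :
    r ^ (2 * m) * Real.exp (-(r * c) / 2) ≤ (4 * m / c) ^ (2 * m) := by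
  rcases Nat.eq_zero_or_pos m with hm | hm
  · subst hm
    simp only [Nat.mul_zero, pow_zero, one_mul]
    exact Real.exp_le_one_iff.2 (by nlinarith [mul_nonneg hr hc.le])
  have hm1 : (1 : ℝ) ≤ (m : ℝ) := by exact_mod_cast hm
  have hmpos : (0:ℝ) < 4 * m / c := by positivity
  have hx : r * c / (4 * m) ≤ Real.exp (r * c / (4 * m)) := by
    have := Real.add_one_le_exp (r * c / (4 * m))
    linarith
  have hr' : r ≤ (4 * m / c) * Real.exp (r * c / (4 * m)) := by
    have := mul_le_mul_of_nonneg_left hx (le_of_lt hmpos)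
    have heq : (4 * m / c) * (r * c / (4 * m)) = r := by
      field_simp
    linarith [heq ▸ this]
  have hpow : r ^ (2 * m) ≤ ((4 * m / c) * Real.exp (r * c / (4 * m))) ^ (2 * m) :=
    pow_le_pow_left₀ hr hr' _
  have hexp : (Real.exp (r * c / (4 * m))) ^ (2 * m) = Real.exp (r * c / 2) := by
    rw [← Real.exp_nat_mul]
    congr 1
    field_simp
    push_cast
    ring
  rw [mul_pow, hexp] at hpow
  calc r ^ (2 * m) * Real.exp (-(r * c) / 2)
      ≤ ((4 * m / c) ^ (2 * m) * Real.exp (r * c / 2)) * Real.exp (-(r * c) / 2) := by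
        exact mul_le_mul_of_nonneg_right hpow (Real.exp_nonneg _)
    _ = (4 * m / c) ^ (2 * m) := by
        rw [mul_assoc, ← Real.exp_add]
        ring_nf
        simp

/-- Tail bound: for `s ≥ m²`, `m ≥ 2`: `s^(4m) e^(-2s) ≤ m^(8m) e^(-2m²)`. -/
lemma aux_tail (m : ℕ) (hm : 2 ≤ m) (s : ℝ) (hs : (m : ℝ) ^ 2 ≤ s) :
    s ^ (4 * m) * Real.exp (-2 * s) ≤ (m : ℝ) ^ (8 * m) * Real.exp (-2 * (m : ℝ) ^ 2) := by
  have hm2 : (2 : ℝ) ≤ (m : ℝ) := by exact_mod_cast hm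
  have hmpos : (0:ℝ) < (m:ℝ) := by linarith
  have hs0 : (0:ℝ) ≤ s := le_trans (by positivity) hs
  have hx : s / (m : ℝ) ^ 2 ≤ Real.exp (s / (m : ℝ) ^ 2 - 1) := by
    have := Real.add_one_le_exp (s / (m : ℝ) ^ 2 - 1)
    linarith
  have hs' : s ≤ (m : ℝ) ^ 2 * Real.exp (s / (m : ℝ) ^ 2 - 1) := by
    have := mul_le_mul_of_nonneg_left hx (by positivity : (0:ℝ) ≤ (m:ℝ)^2)
    have heq : (m : ℝ) ^ 2 * (s / (m : ℝ) ^ 2) = s := by field_simp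
    linarith [heq ▸ this]
  have hpow : s ^ (4 * m) ≤ ((m : ℝ) ^ 2 * Real.exp (s / (m : ℝ) ^ 2 - 1)) ^ (4 * m) :=
    pow_le_pow_left₀ hs0 hs' _
  have hexp : (Real.exp (s / (m : ℝ) ^ 2 - 1)) ^ (4 * m)
      = Real.exp (4 * (m:ℝ) * (s / (m : ℝ) ^ 2 - 1)) := by
    rw [← Real.exp_nat_mul]
    congr 1
    push_cast
    ring
  have hexple : Real.exp (4 * (m:ℝ) * (s / (m : ℝ) ^ 2 - 1)) ≤ Real.exp (2 * s - 2 * (m:ℝ)^2) := by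
    apply Real.exp_le_exp.2
    have h : s / (m : ℝ) ^ 2 - 1 = (s - (m:ℝ)^2) / (m:ℝ)^2 := by field_simp
    rw [h, ← mul_div_assoc, div_le_iff₀ (by positivity : (0:ℝ) < (m:ℝ)^2)]
    nlinarith [mul_nonneg (sub_nonneg.2 hm2) (sub_nonneg.2 hs), hmpos]
  have hmp : ((m:ℝ)^2) ^ (4*m) = (m:ℝ) ^ (8*m) := by
    rw [← pow_mul]; ring_nf
  calc s ^ (4 * m) * Real.exp (-2 * s)
      ≤ ((m : ℝ) ^ 2 * Real.exp (s / (m : ℝ) ^ 2 - 1)) ^ (4 * m) * Real.exp (-2 * s) :=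
        mul_le_mul_of_nonneg_right hpow (Real.exp_nonneg _)
    _ = (m:ℝ) ^ (8*m) * (Real.exp (4 * (m:ℝ) * (s / (m : ℝ) ^ 2 - 1)) * Real.exp (-2 * s)) := by
        rw [mul_pow, hmp, hexp, mul_assoc]
    _ ≤ (m:ℝ) ^ (8*m) * (Real.exp (2 * s - 2 * (m:ℝ)^2) * Real.exp (-2 * s)) := by
        apply mul_le_mul_of_nonneg_left _ (by positivity)
        exact mul_le_mul_of_nonneg_right hexple (Real.exp_nonneg _)
    _ = (m : ℝ) ^ (8 * m) * Real.exp (-2 * (m : ℝ) ^ 2) := by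
        rw [← Real.exp_add]; ring_nf

set_option maxHeartbeats 1000000 in
theorem stmt_12 (θ : ℝ → ℝ) (hmono : AntitoneOn θ (Set.Ici 0))
    (hnn : ∀ r ≥ (0:ℝ), 0 ≤ θ r) (hθ : ∀ r ≥ (1:ℝ), 4 / Real.sqrt r ≤ θ r)
    (hdiv : ¬ Summable (fun m : ℕ => θ ((m : ℝ) ^ 4) / (m : ℝ)))
    (ρ : ℝ) (hρ : 0 ≤ ρ) :
    ¬ Summable (fun m : ℕ =>
      (sSup ((fun r : ℝ => (ρ ^ 2 + r ^ 2) ^ m * Real.exp (-(r * θ r) / 2)) ''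
          Set.Ici 0)) ^ (-(1 : ℝ) / (2 * m))) := by
  intro hsum
  set f : ℕ → ℝ → ℝ := fun m r => (ρ ^ 2 + r ^ 2) ^ m * Real.exp (-(r * θ r) / 2) with hf
  set C : ℝ := 4 * Real.sqrt (ρ ^ 2 + 1) with hC
  have hρ1 : (0:ℝ) < ρ ^ 2 + 1 := by positivity
  have hsq : Real.sqrt (ρ ^ 2 + 1) ^ 2 = ρ ^ 2 + 1 := Real.sq_sqrt hρ1.le
  have hsqpos : 0 < Real.sqrt (ρ ^ 2 + 1) := Real.sqrt_pos.2 hρ1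
  have hCpos : 0 < C := by positivity
  have hθ1 : (4:ℝ) ≤ θ 1 := by
    have := hθ 1 le_rfl
    simpa using this
  -- positivity of θ(m⁴) for m ≥ 1
  have hcpos : ∀ m : ℕ, 1 ≤ m → 0 < θ ((m:ℝ)^4) := fun m hm => by
    have hm1 : (1:ℝ) ≤ (m:ℝ) := by exact_mod_cast hm
    have h1 : (1:ℝ) ≤ (m:ℝ)^4 := one_le_pow₀ hm1
    have h2 := hθ _ h1
    have hsp : 0 < Real.sqrt ((m:ℝ)^4) := Real.sqrt_pos.2 (by linarith)
    have h3 : 0 < 4 / Real.sqrt ((m:ℝ)^4) := by positivity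
    linarith
  have hcle : ∀ m : ℕ, 1 ≤ m → θ ((m:ℝ)^4) ≤ θ 1 := fun m hm => by
    have hm1 : (1:ℝ) ≤ (m:ℝ) := by exact_mod_cast hm
    have h1 : (1:ℝ) ≤ (m:ℝ)^4 := one_le_pow₀ hm1
    exact hmono (Set.mem_Ici.2 (by norm_num)) (Set.mem_Ici.2 (by positivity)) h1
  -- choose N
  obtain ⟨N₀, hN₀⟩ : ∃ N : ℕ, ∀ m ≥ N, θ 1 * (m:ℝ)^3 * Real.exp (-(m:ℝ)) ≤ 4 := by
    have h0 : Filter.Tendsto (fun x : ℝ => θ 1 * (x ^ 3 * Real.exp (-x)))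
        Filter.atTop (nhds (θ 1 * 0)) :=
      (Real.tendsto_pow_mul_exp_neg_atTop_nhds_zero 3).const_mul (θ 1)
    have h1 : Filter.Tendsto (fun m : ℕ => θ 1 * ((m:ℝ) ^ 3 * Real.exp (-(m:ℝ))))
        Filter.atTop (nhds (θ 1 * 0)) := h0.comp tendsto_natCast_atTop_atTop
    have h2 := h1.eventually (eventually_le_nhds (by norm_num : θ 1 * 0 < 4))
    obtain ⟨N, hN⟩ := Filter.eventually_atTop.1 h2
    exact ⟨N, fun m hm => by have := hN m hm; simpa [mul_assoc] using this⟩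
  obtain ⟨N₁, hN₁⟩ : ∃ N : ℕ, ∀ m ≥ N, θ 1 ≤ 4 * (m:ℝ) := by
    obtain ⟨N, hN⟩ := exists_nat_ge (θ 1 / 4)
    refine ⟨N, fun m hm => ?_⟩
    have : (N:ℝ) ≤ m := by exact_mod_cast hm
    nlinarith
  set N := max (max N₀ N₁) 2 with hN
  -- main bound: for m ≥ N and all r ≥ 0, f m r ≤ (C m / θ(m⁴))^(2m)
  have key : ∀ m : ℕ, N ≤ m → ∀ r : ℝ, 0 ≤ r →
      f m r ≤ (C * m / θ ((m:ℝ)^4)) ^ (2 * m) := by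
    intro m hm r hr
    have hm2 : 2 ≤ m := le_trans (le_max_right _ _) hm
    have hm1 : 1 ≤ m := by omega
    have hmR : (2:ℝ) ≤ (m:ℝ) := by exact_mod_cast hm2
    have hc : 0 < θ ((m:ℝ)^4) := hcpos m hm1
    have hcθ1 : θ ((m:ℝ)^4) ≤ θ 1 := hcle m hm1
    have hDpos : 0 < C * m / θ ((m:ℝ)^4) := by positivity
    have hexp0 : Real.exp (-(r * θ r) / 2) ≤ 1 :=
      Real.exp_le_one_iff.2 (by nlinarith [hnn r hr])
    rcases le_or_gt r 1 with hr1 | hr1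
    · -- region [0,1]
      have h1 : f m r ≤ (ρ^2 + 1)^m := by
        have : (ρ^2 + r^2)^m ≤ (ρ^2+1)^m := pow_le_pow_left₀ (by positivity) (by nlinarith) m
        calc f m r ≤ (ρ^2 + r^2)^m * 1 :=
              mul_le_mul_of_nonneg_left hexp0 (by positivity)
          _ = (ρ^2 + r^2)^m := mul_one _
          _ ≤ (ρ^2+1)^m := this
      have h2 : (ρ^2+1)^m = (Real.sqrt (ρ^2+1))^(2*m) := by
        rw [pow_mul, hsq]
      refine h1.trans ?_
      rw [h2]
      apply pow_le_pow_left₀ hsqpos.le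
      rw [le_div_iff₀ hc, hC]
      have h4m : θ 1 ≤ 4 * (m:ℝ) := hN₁ m (le_trans (le_trans (le_max_right _ _) (le_max_left _ _)) hm)
      nlinarith [hsqpos]
    · rcases le_or_gt r ((m:ℝ)^4) with hrm | hrm
      · -- middle region [1, m⁴]
        have hθr : θ ((m:ℝ)^4) ≤ θ r :=
          hmono (Set.mem_Ici.2 (by linarith)) (Set.mem_Ici.2 (by positivity)) hrm
        have hb1 : (ρ^2 + r^2)^m ≤ (ρ^2+1)^m * r^(2*m) := by
          calc (ρ^2 + r^2)^m ≤ ((ρ^2+1)*r^2)^m := by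
                apply pow_le_pow_left₀ (by positivity)
                have h1 : (1:ℝ) ≤ r^2 := by nlinarith
                nlinarith [mul_nonneg (sq_nonneg ρ) (sub_nonneg.2 h1)]
            _ = (ρ^2+1)^m * r^(2*m) := by rw [mul_pow, ← pow_mul]
        have hb2 : Real.exp (-(r * θ r) / 2) ≤ Real.exp (-(r * θ ((m:ℝ)^4)) / 2) := by
          apply Real.exp_le_exp.2
          have : r * θ ((m:ℝ)^4) ≤ r * θ r := mul_le_mul_of_nonneg_left hθr (by linarith)
          linarith
        have hmid := aux_mid m (θ ((m:ℝ)^4)) r hc hr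
        calc f m r ≤ ((ρ^2+1)^m * r^(2*m)) * Real.exp (-(r * θ ((m:ℝ)^4)) / 2) := by
              apply mul_le_mul (le_of_eq rfl |>.trans hb1) hb2 (Real.exp_nonneg _) (by positivity)
          _ = (ρ^2+1)^m * (r^(2*m) * Real.exp (-(r * θ ((m:ℝ)^4)) / 2)) := by ring
          _ ≤ (ρ^2+1)^m * (4 * m / θ ((m:ℝ)^4))^(2*m) :=
              mul_le_mul_of_nonneg_left hmid (by positivity)
          _ = (Real.sqrt (ρ^2+1))^(2*m) * (4 * m / θ ((m:ℝ)^4))^(2*m) := by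
              rw [show (Real.sqrt (ρ^2+1))^(2*m) = (ρ^2+1)^m from by rw [pow_mul, hsq]]
          _ = (C * m / θ ((m:ℝ)^4)) ^ (2 * m) := by
              rw [← mul_pow]
              congr 1
              rw [hC]
              field_simp
      · -- tail region r > m⁴
        have hr1' : (1:ℝ) ≤ r := hr1.le
        have hsr : 0 < Real.sqrt r := Real.sqrt_pos.2 (by linarith)
        have hθr4 : 4 / Real.sqrt r ≤ θ r := hθ r hr1'
        have hsq_r : Real.sqrt r ^ 2 = r := Real.sq_sqrt hr
        -- r θ(r) ≥ 4 √r
        have hrθ : 4 * Real.sqrt r ≤ r * θ r := by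
          have h1 : r * (4 / Real.sqrt r) ≤ r * θ r :=
            mul_le_mul_of_nonneg_left hθr4 (by linarith)
          have h2 : r * (4 / Real.sqrt r) = 4 * Real.sqrt r := by
            calc r * (4 / Real.sqrt r) = 4 * (r / Real.sqrt r) := by ring
              _ = 4 * Real.sqrt r := by rw [Real.div_sqrt]
          linarith [h2 ▸ h1]
        have hexp1 : Real.exp (-(r * θ r) / 2) ≤ Real.exp (-2 * Real.sqrt r) := by
          apply Real.exp_le_exp.2; linarith
        have hb1 : (ρ^2 + r^2)^m ≤ (ρ^2+1)^m * (Real.sqrt r)^(4*m) := by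
          have : (Real.sqrt r)^(4*m) = (r^2)^m := by
            rw [show 4*m = (2*2)*m by ring, pow_mul, pow_mul, hsq_r, ← pow_mul, mul_comm 2 m,
              pow_mul]
          rw [this, ← mul_pow]
          apply pow_le_pow_left₀ (by positivity)
          have h1 : (1:ℝ) ≤ r^2 := by nlinarith
          nlinarith [mul_nonneg (sq_nonneg ρ) (sub_nonneg.2 h1)]
        have hsrm : (m:ℝ)^2 ≤ Real.sqrt r := by
          have : ((m:ℝ)^2)^2 ≤ r := by nlinarith
          calc (m:ℝ)^2 = Real.sqrt (((m:ℝ)^2)^2) := (Real.sqrt_sq (by positivity)).symm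
            _ ≤ Real.sqrt r := Real.sqrt_le_sqrt this
        have htail := aux_tail m hm2 (Real.sqrt r) hsrm
        have hfin : (ρ^2+1)^m * ((m:ℝ)^(8*m) * Real.exp (-2 * (m:ℝ)^2))
            ≤ (C * m / θ ((m:ℝ)^4)) ^ (2 * m) := by
          have hlhs : (ρ^2+1)^m * ((m:ℝ)^(8*m) * Real.exp (-2 * (m:ℝ)^2))
              = (Real.sqrt (ρ^2+1) * (m:ℝ)^4 * Real.exp (-(m:ℝ))) ^ (2*m) := by
            have e1 : (Real.sqrt (ρ^2+1) * (m:ℝ)^4 * Real.exp (-(m:ℝ))) ^ (2*m)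
                = (Real.sqrt (ρ^2+1))^(2*m) * ((m:ℝ)^4)^(2*m) * (Real.exp (-(m:ℝ)))^(2*m) := by
              rw [mul_pow, mul_pow]
            have e2 : (Real.sqrt (ρ^2+1))^(2*m) = (ρ^2+1)^m := by rw [pow_mul, hsq]
            have e3 : ((m:ℝ)^4)^(2*m) = (m:ℝ)^(8*m) := by rw [← pow_mul]; ring_nf
            have e4 : (Real.exp (-(m:ℝ)))^(2*m) = Real.exp (-2*(m:ℝ)^2) := by
              rw [← Real.exp_nat_mul]
              congr 1
              push_cast
              ring
            rw [e1, e2, e3, e4]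
            ring
          rw [hlhs]
          apply pow_le_pow_left₀ (by positivity)
          rw [le_div_iff₀ hc, hC]
          have hN0 : θ 1 * (m:ℝ)^3 * Real.exp (-(m:ℝ)) ≤ 4 :=
            hN₀ m (le_trans (le_trans (le_max_left _ _) (le_max_left _ _)) hm)
          have hθm : θ ((m:ℝ)^4) * (m:ℝ)^3 * Real.exp (-(m:ℝ)) ≤ 4 := by
            have := mul_le_mul_of_nonneg_right
              (mul_le_mul_of_nonneg_right hcθ1 (by positivity : (0:ℝ) ≤ (m:ℝ)^3))
              (Real.exp_nonneg (-(m:ℝ)))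
            linarith
          have hmpos : (0:ℝ) < (m:ℝ) := by linarith
          calc Real.sqrt (ρ^2+1) * (m:ℝ)^4 * Real.exp (-(m:ℝ)) * θ ((m:ℝ)^4)
              = Real.sqrt (ρ^2+1) * (m:ℝ) * (θ ((m:ℝ)^4) * (m:ℝ)^3 * Real.exp (-(m:ℝ))) := by
                ring
            _ ≤ Real.sqrt (ρ^2+1) * (m:ℝ) * 4 := by
                apply mul_le_mul_of_nonneg_left hθm (by positivity)
            _ = 4 * Real.sqrt (ρ^2+1) * (m:ℝ) := by ring
        calc f m r ≤ ((ρ^2+1)^m * (Real.sqrt r)^(4*m)) * Real.exp (-2 * Real.sqrt r) :=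
              mul_le_mul hb1 hexp1 (Real.exp_nonneg _) (by positivity)
          _ = (ρ^2+1)^m * ((Real.sqrt r)^(4*m) * Real.exp (-2 * Real.sqrt r)) := by ring
          _ ≤ (ρ^2+1)^m * ((m:ℝ)^(8*m) * Real.exp (-2 * (m:ℝ)^2)) :=
              mul_le_mul_of_nonneg_left htail (by positivity)
          _ ≤ (C * m / θ ((m:ℝ)^4)) ^ (2 * m) := hfin
  -- From key: b m ≤ bound and b m > 0, hence a m ≥ θ(m⁴)/(C m)
  have lower : ∀ m : ℕ, N ≤ m →
      θ ((m:ℝ)^4) / (C * m) ≤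
        (sSup (f m '' Set.Ici 0)) ^ (-(1 : ℝ) / (2 * (m:ℕ))) := by
    intro m hm
    have hm2 : 2 ≤ m := le_trans (le_max_right _ _) hm
    have hm1 : 1 ≤ m := by omega
    have hmpos : (0:ℝ) < (m:ℝ) := by exact_mod_cast (by omega : 0 < m)
    have hc : 0 < θ ((m:ℝ)^4) := hcpos m hm1
    set D : ℝ := C * m / θ ((m:ℝ)^4) with hD
    have hDpos : 0 < D := by positivity
    have hbdd : BddAbove (f m '' Set.Ici 0) := by
      refine ⟨D ^ (2*m), ?_⟩
      rintro x ⟨r, hr, rfl⟩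
      exact key m hm r hr
    have hne : (f m '' Set.Ici 0).Nonempty := ⟨f m 0, ⟨0, Set.self_mem_Ici, rfl⟩⟩
    have hub : sSup (f m '' Set.Ici 0) ≤ D ^ (2*m) := by
      apply csSup_le hne
      rintro x ⟨r, hr, rfl⟩
      exact key m hm r hr
    have hlb : 0 < sSup (f m '' Set.Ici 0) := by
      have hmem : f m 1 ∈ f m '' Set.Ici 0 := ⟨1, by norm_num, rfl⟩
      have h0 : 0 < f m 1 := by
        apply mul_pos _ (Real.exp_pos _)
        positivity
      exact lt_of_lt_of_le h0 (le_csSup hbdd hmem)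
    have hexp_neg : (-(1:ℝ) / (2 * (m:ℕ))) ≤ 0 := by
      apply div_nonpos_of_nonpos_of_nonneg (by norm_num)
      positivity
    have hstep : (D ^ (2*m)) ^ (-(1:ℝ) / (2 * (m:ℕ)))
        ≤ (sSup (f m '' Set.Ici 0)) ^ (-(1:ℝ) / (2 * (m:ℕ))) :=
      Real.rpow_le_rpow_of_nonpos hlb hub hexp_neg
    have hcalc : (D ^ (2*m)) ^ (-(1:ℝ) / (2 * (m:ℕ))) = D⁻¹ := by
      rw [← Real.rpow_natCast D (2*m), ← Real.rpow_mul hDpos.le]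
      have : ((2*m : ℕ) : ℝ) * (-(1:ℝ) / (2 * (m:ℕ))) = -1 := by
        push_cast
        field_simp
      rw [this, Real.rpow_neg_one]
    have hinv : D⁻¹ = θ ((m:ℝ)^4) / (C * m) := by
      rw [hD]
      field_simp
    rw [hcalc, hinv] at hstep
    exact hstep
  -- comparison: summability of the shifted series θ((m+N)⁴)/(m+N)
  apply hdiv
  rw [← summable_nat_add_iff N]
  have hsum' := (summable_nat_add_iff N).2 (hsum.mul_left C)
  apply Summable.of_nonneg_of_le _ _ hsum'
  · intro m
    have hm1 : 1 ≤ m + N := by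
      have : 2 ≤ N := le_max_right _ _
      omega
    have hc := hcpos (m + N) hm1
    have hmp : (0:ℝ) < ((m+N : ℕ):ℝ) := by exact_mod_cast (by omega : 0 < m + N)
    exact div_nonneg (hnn _ (by positivity)) (by positivity)
  · intro m
    have hmN : N ≤ m + N := by omega
    have h := lower (m + N) hmN
    have hmp : (0:ℝ) < ((m+N : ℕ):ℝ) := by
      have : 2 ≤ N := le_max_right _ _
      exact_mod_cast (by omega : 0 < m + N)
    have h2 : C * (θ (((m+N:ℕ):ℝ)^4) / (C * ((m+N:ℕ):ℝ)))
        ≤ C * (sSup (f (m+N) '' Set.Ici 0)) ^ (-(1 : ℝ) / (2 * ((m + N:ℕ):ℕ))) :=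
      mul_le_mul_of_nonneg_left h hCpos.le
    have h3 : C * (θ (((m+N:ℕ):ℝ)^4) / (C * ((m+N:ℕ):ℝ)))
        = θ (((m+N:ℕ):ℝ)^4) / ((m+N:ℕ):ℝ) := by
      field_simp
    rw [h3] at h2
    convert h2 using 2 <;> push_cast <;> ring_nf
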